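/- Let R = ℚ[t, t⁻¹] be the ring of Laurent polynomials over ℚ and let f = t² − t + 1 ∈ R. Then the R-module R ⧸ (f) is not a retract of the direct sum (R ⧸ (f²)) × (R ⧸ (f²)): there do not exist R-linear maps s : R ⧸ (f) → (R ⧸ (f²)) × (R ⧸ (f²)) and π : (R ⧸ (f²)) × (R ⧸ (f²)) → R ⧸ (f) with π ∘ s = id. -/

import Mathlib

open LaurentPolynomial

/-- The Laurent polynomial `t² − t + 1 ∈ ℚ[t, t⁻¹]`, the Alexander polynomial of the
trefoil knot. -/
noncomputable def trefoilAlexPoly : LaurentPolynomial ℚ := T 2 - T 1 + 1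

/-- Evaluation of Laurent polynomials at a unit of a commutative `ℚ`-algebra. -/
noncomputable def evalUnit {A : Type*} [CommRing A] [Algebra ℚ A] (u : Aˣ) :
    LaurentPolynomial ℚ →ₐ[ℚ] A :=
  AddMonoidAlgebra.lift ℚ A ℤ ((Units.coeHom A).comp (zpowersHom Aˣ u))

lemma evalUnit_T {A : Type*} [CommRing A] [Algebra ℚ A] (u : Aˣ) (n : ℤ) :
    evalUnit u (T n) = ↑(u ^ n) := by
  show AddMonoidAlgebra.lift ℚ A ℤ _ (AddMonoidAlgebra.single n 1) = _
  rw [AddMonoidAlgebra.lift_single]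
  simp

lemma evalUnit_trefoil {A : Type*} [CommRing A] [Algebra ℚ A] (u : Aˣ) :
    evalUnit u trefoilAlexPoly = ↑(u ^ (2 : ℤ)) - ↑(u ^ (1 : ℤ)) + 1 := by
  rw [trefoilAlexPoly, map_add, map_sub, map_one, evalUnit_T, evalUnit_T]

lemma trefoilAlexPoly_ne_zero : trefoilAlexPoly ≠ 0 := by
  intro h
  have := evalUnit_trefoil (A := ℚ) 1
  rw [h, map_zero] at this
  simp at this

/-- The auxiliary quadratic `X² − X + 1` over `ℚ`. -/
noncomputable def trefoilQuad : Polynomial ℚ := Polynomial.X ^ 2 - Polynomial.X + 1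

lemma trefoilQuad_degree : trefoilQuad.degree = 2 := by
  unfold trefoilQuad; compute_degree!

lemma trefoilAlexPoly_not_unit : ¬ IsUnit trefoilAlexPoly := by
  intro h
  -- work in `A = ℚ[X]/(X² - X + 1)`, where the root is a unit killing `f`.
  set A := AdjoinRoot trefoilQuad
  have hnt : Nontrivial A := AdjoinRoot.nontrivial _ (by rw [trefoilQuad_degree]; decide)
  set r : A := AdjoinRoot.root trefoilQuad with hr
  have hroot : r ^ 2 - r + 1 = 0 := by
    have e : AdjoinRoot.mk trefoilQuad (Polynomial.X ^ 2 - Polynomial.X + 1) = r ^ 2 - r + 1 := by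
      simp [hr]
    rw [← e]; exact AdjoinRoot.mk_self
  have hinv : r * (1 - r) = 1 := by linear_combination -hroot
  let u : Aˣ := ⟨r, 1 - r, hinv, by rw [mul_comm]; exact hinv⟩
  have h0 : evalUnit u trefoilAlexPoly = 0 := by
    rw [evalUnit_trefoil]
    have h2 : ((u ^ (2 : ℤ) : Aˣ) : A) = r ^ 2 := by
      rw [show (2 : ℤ) = ((2 : ℕ) : ℤ) by norm_num, zpow_natCast, Units.val_pow_eq_pow_val]
    have h1 : ((u ^ (1 : ℤ) : Aˣ) : A) = r := by rw [zpow_one]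
    rw [h1, h2]
    linear_combination hroot
  have : IsUnit (evalUnit u trefoilAlexPoly) := h.map (evalUnit u)
  rw [h0] at this
  exact not_isUnit_zero this

set_option maxHeartbeats 1000000 in
/-- For `R = ℚ[t, t⁻¹]` and `f = t² − t + 1`, the `R`-module `R ⧸ (f)`
is not a retract of `(R ⧸ (f²)) × (R ⧸ (f²))`: there are no `R`-linear maps
`s : R ⧸ (f) → (R ⧸ (f²)) × (R ⧸ (f²))` and `π : (R ⧸ (f²)) × (R ⧸ (f²)) → R ⧸ (f)` with
`π ∘ s = id`. -/
theorem trefoil_module_not_retract_of_10_99_module :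
    ¬∃ (s : (LaurentPolynomial ℚ ⧸ Ideal.span {trefoilAlexPoly}) →ₗ[LaurentPolynomial ℚ]
          ((LaurentPolynomial ℚ ⧸ Ideal.span {trefoilAlexPoly ^ 2}) ×
            (LaurentPolynomial ℚ ⧸ Ideal.span {trefoilAlexPoly ^ 2})))
        (π : ((LaurentPolynomial ℚ ⧸ Ideal.span {trefoilAlexPoly ^ 2}) ×
            (LaurentPolynomial ℚ ⧸ Ideal.span {trefoilAlexPoly ^ 2})) →ₗ[LaurentPolynomial ℚ]
          (LaurentPolynomial ℚ ⧸ Ideal.span {trefoilAlexPoly})),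
      π ∘ₗ s = LinearMap.id := by
  rintro ⟨s, π, h⟩
  have smul_mk : ∀ (I : Ideal (LaurentPolynomial ℚ)) (r a : LaurentPolynomial ℚ),
      r • (Ideal.Quotient.mk I a) = Ideal.Quotient.mk I (r * a) := fun _ _ _ => rfl
  set x := s (Ideal.Quotient.mk (Ideal.span {trefoilAlexPoly}) 1) with hx
  have hfx : trefoilAlexPoly • x = 0 := by
    have hm : trefoilAlexPoly ∈ Ideal.span {trefoilAlexPoly} :=
      Ideal.subset_span (Set.mem_singleton _)
    rw [hx, ← map_smul, smul_mk, mul_one, Ideal.Quotient.eq_zero_iff_mem.mpr hm, map_zero]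
  obtain ⟨a₁, ha₁⟩ := Ideal.Quotient.mk_surjective x.1
  obtain ⟨a₂, ha₂⟩ := Ideal.Quotient.mk_surjective x.2
  have key : ∀ a : LaurentPolynomial ℚ,
      Ideal.Quotient.mk (Ideal.span {trefoilAlexPoly ^ 2}) (trefoilAlexPoly * a) = 0 → ∃ b, a = trefoilAlexPoly * b := by
    intro a ha
    rw [Ideal.Quotient.eq_zero_iff_mem, Ideal.mem_span_singleton] at ha
    obtain ⟨c, hc⟩ := ha
    refine ⟨c, mul_left_cancel₀ trefoilAlexPoly_ne_zero ?_⟩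
    rw [hc]; ring
  have h1 : Ideal.Quotient.mk (Ideal.span {trefoilAlexPoly ^ 2}) (trefoilAlexPoly * a₁) = 0 := by
    have := congrArg Prod.fst hfx
    rwa [Prod.smul_fst, Prod.fst_zero, ← ha₁, smul_mk] at this
  have h2 : Ideal.Quotient.mk (Ideal.span {trefoilAlexPoly ^ 2}) (trefoilAlexPoly * a₂) = 0 := by
    have := congrArg Prod.snd hfx
    rwa [Prod.smul_snd, Prod.snd_zero, ← ha₂, smul_mk] at this
  obtain ⟨b₁, hb₁⟩ := key a₁ h1
  obtain ⟨b₂, hb₂⟩ := key a₂ h2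
  have hxfy : x = trefoilAlexPoly • (Ideal.Quotient.mk (Ideal.span {trefoilAlexPoly ^ 2}) b₁,
      Ideal.Quotient.mk (Ideal.span {trefoilAlexPoly ^ 2}) b₂) := by
    apply Prod.ext
    · rw [← ha₁, hb₁, Prod.smul_fst, smul_mk]
    · rw [← ha₂, hb₂, Prod.smul_snd, smul_mk]
  have hone : (Ideal.Quotient.mk (Ideal.span {trefoilAlexPoly}) 1 : _) =
      trefoilAlexPoly • π (Ideal.Quotient.mk (Ideal.span {trefoilAlexPoly ^ 2}) b₁,
        Ideal.Quotient.mk (Ideal.span {trefoilAlexPoly ^ 2}) b₂) := by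
    have h' := congrFun (congrArg DFunLike.coe h) (Ideal.Quotient.mk (Ideal.span {trefoilAlexPoly}) 1)
    simp only [LinearMap.comp_apply, LinearMap.id_apply] at h'
    rw [← h', ← hx, hxfy, map_smul]
  obtain ⟨c, hc⟩ := Ideal.Quotient.mk_surjective (π (Ideal.Quotient.mk (Ideal.span {trefoilAlexPoly ^ 2}) b₁,
    Ideal.Quotient.mk (Ideal.span {trefoilAlexPoly ^ 2}) b₂))
  rw [← hc, smul_mk] at hone
  have hmem : (1 : LaurentPolynomial ℚ) - trefoilAlexPoly * c ∈ Ideal.span {trefoilAlexPoly} := by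
    rw [← Ideal.Quotient.eq_zero_iff_mem, map_sub, hone, sub_self]
  rw [Ideal.mem_span_singleton] at hmem
  obtain ⟨d, hd⟩ := hmem
  exact trefoilAlexPoly_not_unit
    (IsUnit.of_mul_eq_one (c + d) (by linear_combination -hd))
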